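/- arXiv:0808.1404 — 7 statements merged into one kernel-verified Lean document; each statement's English description precedes it below -/
import Mathlib

section
/- Let S be a semigroup and ω a weight on S. The weighted semigroup algebra ℓ¹(S,ω) is a right dual Banach algebra with predual c₀(S,ω) (i.e. c₀(S,ω)·ℓ¹(S,ω) ⊆ c₀(S,ω)) if and only if 1_{t⁻¹s}/ω ∈ c₀(S) for all s, t ∈ S. -/
open Set Filter

/-- A function on `S` "vanishes at infinity" (belongs to `c₀(S)`). -/
def IsC0 {S : Type*} (g : S → ℝ) : Prop := ∀ ε > 0, {x | ε ≤ |g x|}.Finite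

/-- A weight on a semigroup: positive and submultiplicative. -/
def IsWeight {S : Type*} [Mul S] (ω : S → ℝ) : Prop :=
  (∀ s, 0 < ω s) ∧ ∀ s t, ω (s * t) ≤ ω s * ω t

/-- Membership in `ℓ¹(S, ω)`. -/
def MemL1 {S : Type*} (ω f : S → ℝ) : Prop := Summable fun s => |f s| * ω s

/-- Membership in `c₀(S, ω) = {φ ∈ ℓ∞(S,ω) : φ/ω ∈ c₀(S)}`. -/
def IsC0w {S : Type*} (ω φ : S → ℝ) : Prop := IsC0 fun s => φ s / ω s

/-- The left module action `φ · f` of `f ∈ ℓ¹(S,ω)` on `φ ∈ ℓ∞(S,ω)`,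
determined by `⟨φ·f, g⟩ = ⟨φ, f*g⟩`; pointwise `(φ·f)(r) = ∑_u f(u) φ(u r)`. -/
noncomputable def act {S : Type*} [Mul S] (f φ : S → ℝ) : S → ℝ :=
  fun r => ∑' u, f u * φ (u * r)

/-- The right module action `f · φ`, determined by `⟨f·φ, g⟩ = ⟨φ, g*f⟩`;
pointwise `(f·φ)(r) = ∑_u f(u) φ(r u)`. -/
noncomputable def actR {S : Type*} [Mul S] (f φ : S → ℝ) : S → ℝ :=
  fun r => ∑' u, f u * φ (r * u)

/-- A semigroup is weakly cancellative if `s⁻¹F` and `Fs⁻¹` are finite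
for every `s` and every finite `F`. -/
def WeaklyCancellative (S : Type*) [Mul S] : Prop :=
  ∀ (s : S) (F : Finset S), {t | s * t ∈ F}.Finite ∧ {t | t * s ∈ F}.Finite

lemma isC0_bdd {S : Type*} {g : S → ℝ} (h : IsC0 g) : ∃ M : ℝ, 1 ≤ M ∧ ∀ x, |g x| ≤ M := by
  classical
  have hfin := h 1 one_pos
  refine ⟨1 + ∑ x ∈ hfin.toFinset, |g x|,
    le_add_of_nonneg_right (Finset.sum_nonneg fun x _ => abs_nonneg _), fun x => ?_⟩
  by_cases hx : x ∈ hfin.toFinset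
  · have := Finset.single_le_sum (f := fun x => |g x|) (fun y _ => abs_nonneg _) hx
    linarith
  · have : ¬ (1 : ℝ) ≤ |g x| := by simpa using hx
    have h2 : (0:ℝ) ≤ ∑ x ∈ hfin.toFinset, |g x| := Finset.sum_nonneg fun y _ => abs_nonneg _
    linarith
/-- `ℓ¹(S,ω)` is a right dual Banach algebra with predual `c₀(S,ω)`
(i.e. `c₀(S,ω) · ℓ¹(S,ω) ⊆ c₀(S,ω)`) iff `1_{t⁻¹s}/ω ∈ c₀(S)` for all `s, t`. -/
theorem rightDual_iff {S : Type*} [Semigroup S] {ω : S → ℝ} (hω : IsWeight ω) :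
    (∀ φ : S → ℝ, IsC0w ω φ → ∀ f : S → ℝ, MemL1 ω f → IsC0w ω (act f φ)) ↔
      ∀ s t : S, IsC0 fun r => Set.indicator {r | t * r = s} (1 : S → ℝ) r / ω r := by
  constructor
  · intro H s t
    classical
    have hφ : IsC0w ω (Set.indicator {s} (1 : S → ℝ)) := by
      intro ε hε
      refine Set.Finite.subset (Set.finite_singleton s) fun x hx => ?_
      simp only [Set.mem_setOf_eq] at hx
      by_contra hxs
      rw [Set.indicator_of_notMem (by simpa using hxs)] at hx
      simp at hx
      linarith
    have hf : MemL1 ω (Set.indicator {t} (1 : S → ℝ)) := by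
      apply summable_of_ne_finset_zero (s := {t})
      intro u hu
      rw [Set.indicator_of_notMem (by simpa using hu)]
      simp
    have hmain := H _ hφ _ hf
    have key : ∀ r, act (Set.indicator {t} (1 : S → ℝ)) (Set.indicator {s} (1 : S → ℝ)) r
        = Set.indicator {r | t * r = s} (1 : S → ℝ) r := by
      intro r
      rw [act, tsum_eq_single t ?_]
      · by_cases hts : t * r = s
        · simp [Set.indicator, hts]
        · simp [Set.indicator, hts]
      · intro u hu
        rw [Set.indicator_of_notMem (by simpa using hu)]
        simp
    have heq : (fun r => Set.indicator {r | t * r = s} (1 : S → ℝ) r / ω r)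
        = fun r => act (Set.indicator {t} (1 : S → ℝ)) (Set.indicator {s} (1 : S → ℝ)) r / ω r :=
      funext fun r => by rw [key]
    rw [show (IsC0 fun r => Set.indicator {r | t * r = s} (1 : S → ℝ) r / ω r) = _ from congrArg IsC0 heq]
    exact hmain
  · intro h
    classical
    intro φ hφ f hf
    obtain ⟨M, hM1, hMb⟩ := isC0_bdd hφ
    have hMpos : (0:ℝ) < M := lt_of_lt_of_le one_pos hM1
    have hφb : ∀ x, |φ x| ≤ M * ω x := by
      intro x
      have h1 := hMb x
      have h2 := hω.1 x
      rw [abs_div, abs_of_pos h2, div_le_iff₀ h2] at h1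
      linarith [h1]
    -- per-u finiteness
    have keyU : ∀ (u : S), ∀ δ > (0:ℝ), {r | δ ≤ |φ (u * r)| / ω r}.Finite := by
      intro u δ hδ
      have hωu := hω.1 u
      have hF := hφ (δ / ω u) (div_pos hδ hωu)
      refine Set.Finite.subset (Set.Finite.biUnion hF (fun x _ =>
        h x u (δ / (|φ x| + 1)) (by positivity))) ?_
      intro r hr
      simp only [Set.mem_setOf_eq] at hr
      have hωr := hω.1 r
      have hφr : δ * ω r ≤ |φ (u * r)| := by
        rw [le_div_iff₀ hωr] at hr; linarith
      have hxmem : δ / ω u ≤ |φ (u * r) / ω (u * r)| := by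
        rw [abs_div, abs_of_pos (hω.1 (u * r)), le_div_iff₀ (hω.1 (u * r)), div_mul_eq_mul_div,
          div_le_iff₀ hωu]
        have hsub := hω.2 u r
        nlinarith [abs_nonneg (φ (u * r))]
      refine Set.mem_biUnion hxmem ?_
      simp only [Set.mem_setOf_eq]
      rw [Set.indicator_of_mem (by exact rfl : r ∈ {r' | u * r' = u * r}), Pi.one_apply,
        abs_div, abs_one, abs_of_pos hωr, le_div_iff₀ hωr, div_mul_eq_mul_div, div_le_iff₀]
      · nlinarith [abs_nonneg (φ (u * r))]
      · positivity
    -- main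
    intro ε hε
    have hbound : ∀ r u, |f u * φ (u * r)| ≤ M * ω r * (|f u| * ω u) := by
      intro r u
      rw [abs_mul]
      have h2 : M * ω (u * r) ≤ M * (ω u * ω r) :=
        mul_le_mul_of_nonneg_left (hω.2 u r) hMpos.le
      calc |f u| * |φ (u * r)| ≤ |f u| * (M * (ω u * ω r)) :=
            mul_le_mul_of_nonneg_left ((hφb (u * r)).trans h2) (abs_nonneg _)
        _ = M * ω r * (|f u| * ω u) := by ring
    have hsumm : ∀ r, Summable fun u => |f u * φ (u * r)| := fun r =>
      Summable.of_nonneg_of_le (fun u => abs_nonneg _) (hbound r) (hf.mul_left _)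
    obtain ⟨T, hT⟩ := ((tendsto_tsum_compl_atTop_zero (fun u => |f u| * ω u)).eventually
      (eventually_lt_nhds (show (0:ℝ) < ε / (2 * M) by positivity))).exists
    set c : ℝ := ε / (2 * (T.card + 1)) with hc
    have hcpos : 0 < c := by positivity
    have hsub : {r | ε ≤ |act f φ r / ω r|} ⊆
        ⋃ u ∈ (T : Set S), {r | c ≤ |f u| * (|φ (u * r)| / ω r)} := by
      intro r hr
      simp only [Set.mem_setOf_eq] at hr
      have hωr := hω.1 r
      by_contra hcon
      simp only [Set.mem_iUnion, Set.mem_setOf_eq, not_exists, not_le, Finset.mem_coe] at hcon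
      have hterm : ∀ u ∈ T, |f u * φ (u * r)| < c * ω r := by
        intro u hu
        have h5 := hcon u hu
        rw [abs_mul]
        calc |f u| * |φ (u * r)| = |f u| * (|φ (u * r)| / ω r) * ω r := by
              field_simp
          _ < c * ω r := by nlinarith
      have hsumT : ∑ u ∈ T, |f u * φ (u * r)| ≤ T.card * (c * ω r) := by
        calc ∑ u ∈ T, |f u * φ (u * r)| ≤ ∑ _u ∈ T, c * ω r :=
              Finset.sum_le_sum fun u hu => le_of_lt (hterm u hu)
          _ = T.card * (c * ω r) := by rw [Finset.sum_const, nsmul_eq_mul]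
      have htailsum : Summable fun u : ↑((T : Set S)ᶜ) => |f (u:S)| * ω (u:S) :=
        hf.subtype _
      have htail : ∑' u : ↑((T : Set S)ᶜ), |f (u:S) * φ ((u:S) * r)| ≤
          M * ω r * ∑' u : ↑((T : Set S)ᶜ), (|f (u:S)| * ω (u:S)) := by
        rw [← tsum_mul_left]
        exact Summable.tsum_le_tsum (fun u => hbound r u) ((hsumm r).subtype _) (htailsum.mul_left _)
      have htail2 : (∑' u : ↑((T : Set S)ᶜ), (|f (u:S)| * ω (u:S))) < ε / (2 * M) := by
        have he : (∑' u : {x // x ∉ T}, (|f (u:S)| * ω (u:S)))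
            = ∑' u : ↑((T : Set S)ᶜ), (|f (u:S)| * ω (u:S)) :=
          (Equiv.subtypeEquivRight (fun x => by simp)).tsum_eq
            (fun u : ↑((T : Set S)ᶜ) => |f (u:S)| * ω (u:S))
        rw [← he]
        exact hT
      have htail3 : M * ω r * (∑' u : ↑((T : Set S)ᶜ), (|f (u:S)| * ω (u:S))) <
          ε * ω r / 2 := by
        have := mul_lt_mul_of_pos_left htail2 (show (0:ℝ) < M * ω r by positivity)
        calc M * ω r * (∑' u : ↑((T : Set S)ᶜ), (|f (u:S)| * ω (u:S)))
            < M * ω r * (ε / (2 * M)) := this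
          _ = ε * ω r / 2 := by field_simp
      have hsplit := Summable.sum_add_tsum_compl (s := T) (hsumm r)
      have habs : |act f φ r| ≤ ∑' u, |f u * φ (u * r)| := by
        simpa [Real.norm_eq_abs, act, abs_mul] using
          norm_tsum_le_tsum_norm (f := fun u => f u * φ (u * r))
            (by simpa [Real.norm_eq_abs, abs_mul] using hsumm r)
      have hεr : ε * ω r ≤ |act f φ r| := by
        rw [abs_div, abs_of_pos hωr, le_div_iff₀ hωr] at hr
        linarith
      have hcard : (T.card : ℝ) * c < ε / 2 := by
        have he2 : (T.card:ℝ) * (ε / (2 * ((T.card:ℝ) + 1))) = (T.card : ℝ) * ε / (2 * ((T.card:ℝ)+1)) :=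
          (mul_div_assoc _ _ _).symm
        rw [hc, he2, div_lt_div_iff₀ (by positivity) two_pos]
        nlinarith [Nat.cast_nonneg (α := ℝ) T.card]
      have hcard2 : (T.card : ℝ) * (c * ω r) < ε / 2 * ω r := by
        have := mul_lt_mul_of_pos_right hcard hωr
        linarith [this]
      linarith [hsumT, htail, htail3, hsplit, habs, hεr, hcard2]
    refine Set.Finite.subset (Set.Finite.biUnion T.finite_toSet (fun u _ => ?_)) hsub
    by_cases hfu : f u = 0
    · simp only [hfu, abs_zero, zero_mul]
      refine Set.Finite.subset (Set.finite_empty) ?_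
      intro r hr
      simp only [Set.mem_setOf_eq] at hr
      exact absurd hr (not_le.mpr hcpos)
    · have hfa : 0 < |f u| := abs_pos.mpr hfu
      refine Set.Finite.subset (keyU u (c / |f u|) (by positivity)) ?_
      intro r hr
      simp only [Set.mem_setOf_eq] at hr ⊢
      rw [div_le_iff₀ hfa]
      linarith [hr]
end

section
/- Let S be a semigroup and ω a weight on S. Then ℓ¹(S,ω) is a dual Banach algebra with predual c₀(S) if and only if 1_{st⁻¹}/ω ∈ c₀(S) and 1_{t⁻¹s}/ω ∈ c₀(S) for all s, t ∈ S. -/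
open Set Filter

lemma isC0_bound {S : Type*} {g : S → ℝ} (h : IsC0 g) :
    ∃ C : ℝ, 0 < C ∧ ∀ x, |g x| ≤ C := by
  have hfin := h 1 one_pos
  refine ⟨1 + ∑ x ∈ hfin.toFinset, |g x|, by positivity, fun x => ?_⟩
  by_cases hx : x ∈ hfin.toFinset
  · have : |g x| ≤ ∑ y ∈ hfin.toFinset, |g y| :=
      Finset.single_le_sum (f := fun y => |g y|) (fun y _ => abs_nonneg _) hx
    linarith
  · have h1 : |g x| < 1 := by
      by_contra hcon
      exact hx (by simpa [Set.Finite.mem_toFinset] using le_of_not_gt hcon)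
    have h2 : 0 ≤ ∑ y ∈ hfin.toFinset, |g y| := Finset.sum_nonneg fun y _ => abs_nonneg _
    linarith

lemma main_lemma {S : Type*} (m : S → S → S) {ω : S → ℝ}
    (hpos : ∀ s, 0 < ω s) (hsub : ∀ u r, ω (m u r) ≤ ω u * ω r)
    (hcond : ∀ s t : S, IsC0 fun r => Set.indicator {r | m t r = s} (1 : S → ℝ) r / ω r)
    {φ : S → ℝ} (hφ : IsC0 fun x => φ x / ω x)
    {f : S → ℝ} (hf : Summable fun s => |f s| * ω s) :
    IsC0 fun r => (∑' u, f u * φ (m u r)) / ω r := by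
  obtain ⟨C, hC0, hC⟩ := isC0_bound hφ
  have hφle : ∀ x, |φ x| ≤ C * ω x := by
    intro x
    have h1 := hC x
    rw [abs_div, abs_of_pos (hpos x), div_le_iff₀ (hpos x)] at h1
    exact h1
  have hsumm : ∀ r, Summable fun u => |f u| * |φ (m u r)| := by
    intro r
    refine Summable.of_nonneg_of_le (fun u => by positivity) (fun u => ?_)
      (hf.mul_left (C * ω r))
    calc |f u| * |φ (m u r)| ≤ |f u| * (C * ω (m u r)) :=
          mul_le_mul_of_nonneg_left (hφle _) (abs_nonneg _)
      _ ≤ |f u| * (C * (ω u * ω r)) := by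
          gcongr
          exact hsub u r
      _ = (C * ω r) * (|f u| * ω u) := by ring
  have habs : ∀ r, |∑' u, f u * φ (m u r)| ≤ ∑' u, |f u| * |φ (m u r)| := by
    intro r
    have hs : Summable fun u => ‖f u * φ (m u r)‖ := by
      simpa [Real.norm_eq_abs, abs_mul] using hsumm r
    simpa [Real.norm_eq_abs, abs_mul] using norm_tsum_le_tsum_norm hs
  obtain ⟨M, hMdef⟩ : ∃ M, M = ∑' u, |f u| * ω u := ⟨_, rfl⟩
  have hM0 : 0 ≤ M := hMdef ▸ tsum_nonneg fun u => mul_nonneg (abs_nonneg _) (hpos u).le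
  intro ε hε
  -- choose tail finset F
  have hεC : 0 < ε / (3 * C) := div_pos hε (by linarith)
  obtain ⟨F, hF⟩ := ((tendsto_tsum_compl_atTop_zero fun u => |f u| * ω u).eventually
      (gt_mem_nhds hεC)).exists
  obtain ⟨δ, hδdef⟩ : ∃ d, d = ε / (3 * (M + 1)) := ⟨_, rfl⟩
  have hδ : 0 < δ := hδdef ▸ div_pos hε (by linarith)
  have hGfin := hφ δ hδ
  obtain ⟨G, hGdef⟩ : ∃ G : Finset S, G = hGfin.toFinset := ⟨_, rfl⟩
  obtain ⟨K, hKdef⟩ : ∃ K, K = 1 + ∑ g ∈ G, ω g := ⟨_, rfl⟩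
  have hK0 : 0 < K := by
    have : 0 ≤ ∑ g ∈ G, ω g := Finset.sum_nonneg fun g _ => (hpos g).le
    rw [hKdef]; linarith
  have hK : ∀ g ∈ G, ω g ≤ K := by
    intro g hg
    have : ω g ≤ ∑ g' ∈ G, ω g' := Finset.single_le_sum (fun g' _ => (hpos g').le) hg
    rw [hKdef]; linarith
  obtain ⟨L, hLdef⟩ : ∃ L, L = ∑ u ∈ F, |f u| := ⟨_, rfl⟩
  have hL0 : 0 ≤ L := hLdef ▸ Finset.sum_nonneg fun u _ => abs_nonneg _
  obtain ⟨B, hBdef⟩ : ∃ B, B = C * K * L + 1 := ⟨_, rfl⟩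
  have hB : 0 < B := by
    have : 0 ≤ C * K * L := by positivity
    rw [hBdef]; linarith
  obtain ⟨η, hηdef⟩ : ∃ e, e = ε / (3 * B) := ⟨_, rfl⟩
  have hη : 0 < η := hηdef ▸ div_pos hε (by linarith)
  -- the bad set is contained in a finite union of fibers
  have hunion : (⋃ p ∈ (F ×ˢ G : Finset (S × S)),
      {r | η ≤ |Set.indicator {r' | m p.1 r' = p.2} (1 : S → ℝ) r / ω r|}).Finite :=
    Set.Finite.biUnion (F ×ˢ G).finite_toSet fun p _ => hcond p.2 p.1 η hη
  refine hunion.subset ?_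
  intro r hr
  simp only [Set.mem_setOf_eq] at hr
  by_contra hru
  have key : ∀ u ∈ F, m u r ∈ G → (1 : ℝ) / ω r < η := by
    intro u hu hgu
    have hp : (u, m u r) ∈ F ×ˢ G := Finset.mem_product.mpr ⟨hu, hgu⟩
    have hnot : r ∉ {r' | η ≤ |Set.indicator {r'' | m u r'' = m u r} (1 : S → ℝ) r' / ω r'|} :=
      fun hmem => hru (Set.mem_biUnion hp hmem)
    simp only [Set.mem_setOf_eq, not_le] at hnot
    rwa [Set.indicator_of_mem (by simp : r ∈ {r'' | m u r'' = m u r}), Pi.one_apply,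
      abs_of_pos (one_div_pos.mpr (hpos r))] at hnot
  have hterm : ∀ u ∈ F, |f u| * |φ (m u r)| ≤
      δ * (|f u| * ω u) * ω r + η * ω r * (C * K) * |f u| := by
    intro u hu
    by_cases hg : m u r ∈ G
    · have h1 : 1 / ω r < η := key u hu hg
      have h2 : 1 < η * ω r := by
        rw [div_lt_iff₀ (hpos r)] at h1; linarith
      have h3 : |φ (m u r)| ≤ C * K :=
        (hφle _).trans (mul_le_mul_of_nonneg_left (hK _ hg) hC0.le)
      have h4 : |f u| * |φ (m u r)| ≤ |f u| * (C * K) :=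
        mul_le_mul_of_nonneg_left h3 (abs_nonneg _)
      have h5 : 0 ≤ δ * (|f u| * ω u) * ω r :=
        mul_nonneg (mul_nonneg hδ.le (mul_nonneg (abs_nonneg _) (hpos u).le)) (hpos r).le
      have h6 : |f u| * (C * K) ≤ η * ω r * (C * K) * |f u| := by
        nlinarith [mul_nonneg (mul_pos hC0 hK0).le (abs_nonneg (f u))]
      linarith
    · have hδg : |φ (m u r) / ω (m u r)| < δ := by
        by_contra hcon
        exact hg (by simpa [hGdef, Set.Finite.mem_toFinset] using le_of_not_gt hcon)
      rw [abs_div, abs_of_pos (hpos _), div_lt_iff₀ (hpos _)] at hδg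
      have h2 : |φ (m u r)| ≤ δ * (ω u * ω r) := by
        have := hsub u r
        nlinarith
      have h3 : |f u| * |φ (m u r)| ≤ δ * (|f u| * ω u) * ω r := by
        have := mul_le_mul_of_nonneg_left h2 (abs_nonneg (f u))
        nlinarith
      have h4 : 0 ≤ η * ω r * (C * K) * |f u| :=
        mul_nonneg (mul_nonneg (mul_nonneg hη.le (hpos r).le)
          (mul_nonneg hC0.le hK0.le)) (abs_nonneg _)
      linarith
  have hFM : ∑ u ∈ F, |f u| * ω u ≤ M :=
    hMdef ▸ Summable.sum_le_tsum F (fun u _ => mul_nonneg (abs_nonneg _) (hpos u).le) hf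
  have hsumF : ∑ u ∈ F, |f u| * |φ (m u r)| ≤ δ * M * ω r + η * ω r * (C * K) * L := by
    calc ∑ u ∈ F, |f u| * |φ (m u r)|
        ≤ ∑ u ∈ F, (δ * (|f u| * ω u) * ω r + η * ω r * (C * K) * |f u|) :=
          Finset.sum_le_sum hterm
      _ = δ * (∑ u ∈ F, |f u| * ω u) * ω r + η * ω r * (C * K) * L := by
          rw [Finset.sum_add_distrib]
          congr 1
          · rw [← Finset.sum_mul, ← Finset.mul_sum]
          · rw [hLdef, Finset.mul_sum]
      _ ≤ δ * M * ω r + η * ω r * (C * K) * L := by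
          have h := mul_le_mul_of_nonneg_right
            (mul_le_mul_of_nonneg_left hFM hδ.le) (hpos r).le
          linarith
  have htail : (∑' u : {x // x ∉ F}, |f u.1| * |φ (m u.1 r)|) < ε / 3 * ω r := by
    have hb : ∀ u : {x // x ∉ F}, |f u.1| * |φ (m u.1 r)| ≤ (C * ω r) * (|f u.1| * ω u.1) := by
      intro u
      calc |f u.1| * |φ (m u.1 r)| ≤ |f u.1| * (C * ω (m u.1 r)) :=
            mul_le_mul_of_nonneg_left (hφle _) (abs_nonneg _)
        _ ≤ |f u.1| * (C * (ω u.1 * ω r)) := by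
            gcongr
            exact hsub u.1 r
        _ = (C * ω r) * (|f u.1| * ω u.1) := by ring
    have h1 : (∑' u : {x // x ∉ F}, |f u.1| * |φ (m u.1 r)|) ≤
        (C * ω r) * ∑' u : {x // x ∉ F}, |f u.1| * ω u.1 := by
      rw [← tsum_mul_left]
      exact Summable.tsum_le_tsum hb ((hsumm r).subtype _) ((hf.mul_left (C * ω r)).subtype _)
    have h2 : (C * ω r) * (∑' u : {x // x ∉ F}, |f u.1| * ω u.1) <
        (C * ω r) * (ε / (3 * C)) := by
      exact mul_lt_mul_of_pos_left hF (mul_pos hC0 (hpos r))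
    have h3 : (C * ω r) * (ε / (3 * C)) = ε / 3 * ω r := by
      field_simp
    linarith
  have hsplit : (∑' u, |f u| * |φ (m u r)|) =
      ∑ u ∈ F, |f u| * |φ (m u r)| + ∑' u : {x // x ∉ F}, |f u.1| * |φ (m u.1 r)| :=
    (Summable.sum_add_tsum_compl (hsumm r)).symm
  have hδM : δ * M ≤ ε / 3 := by
    have h : δ * (3 * (M + 1)) = ε := by
      rw [hδdef]; field_simp
    nlinarith [hδ.le, hM0]
  have hηL : η * (C * K) * L < ε / 3 := by
    have h1 : η * (3 * B) = ε := by
      rw [hηdef]; field_simp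
    rw [hBdef] at h1
    nlinarith [hη]
  have hfinal : |(∑' u, f u * φ (m u r))| < ε * ω r := by
    have := habs r
    have hωr := hpos r
    calc |(∑' u, f u * φ (m u r))| ≤ ∑' u, |f u| * |φ (m u r)| := habs r
      _ = ∑ u ∈ F, |f u| * |φ (m u r)| + ∑' u : {x // x ∉ F}, |f u.1| * |φ (m u.1 r)| := hsplit
      _ < (δ * M * ω r + η * ω r * (C * K) * L) + ε / 3 * ω r := by linarith
      _ ≤ ε / 3 * ω r + ε / 3 * ω r + ε / 3 * ω r := by nlinarith
      _ = ε * ω r := by ring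
  rw [abs_div, abs_of_pos (hpos r), le_div_iff₀ (hpos r)] at hr
  linarith

/-- `ℓ¹(S,ω)` is a dual Banach algebra with predual `c₀(S)` iff
`1_{st⁻¹}/ω ∈ c₀(S)` and `1_{t⁻¹s}/ω ∈ c₀(S)` for all `s, t ∈ S`. -/
theorem dual_iff {S : Type*} [Semigroup S] {ω : S → ℝ} (hω : IsWeight ω) :
    (∀ φ : S → ℝ, IsC0w ω φ → ∀ f : S → ℝ, MemL1 ω f →
        IsC0w ω (act f φ) ∧ IsC0w ω (actR f φ)) ↔
      ∀ s t : S,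
        (IsC0 fun r => Set.indicator {r | r * t = s} (1 : S → ℝ) r / ω r) ∧
        (IsC0 fun r => Set.indicator {r | t * r = s} (1 : S → ℝ) r / ω r) := by
  constructor
  · intro h s t
    set φ : S → ℝ := Set.indicator {s} (1 : S → ℝ) with hφdef
    set f : S → ℝ := Set.indicator {t} (1 : S → ℝ) with hfdef
    have hφ : IsC0w ω φ := by
      intro ε hε
      apply Set.Finite.subset (Set.finite_singleton s)
      intro x hx
      simp only [Set.mem_setOf_eq] at hx
      by_contra hxs
      have hx0 : φ x = 0 := Set.indicator_of_notMem (by simpa using hxs) _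
      rw [hx0, zero_div, abs_zero] at hx
      linarith
    have hf : MemL1 ω f := by
      apply summable_of_ne_finset_zero (s := {t})
      intro u hu
      have : f u = 0 := Set.indicator_of_notMem (by simpa using hu) _
      rw [this, abs_zero, zero_mul]
    obtain ⟨h1, h2⟩ := h φ hφ f hf
    have keyL : ∀ r, act f φ r = Set.indicator {r' | t * r' = s} (1 : S → ℝ) r := by
      intro r
      have hts : act f φ r = f t * φ (t * r) :=
        tsum_eq_single t fun u hu => by
          have : f u = 0 := Set.indicator_of_notMem (by simpa using hu) _
          rw [this, zero_mul]
      rw [hts, hφdef, hfdef,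
        Set.indicator_of_mem (Set.mem_singleton t) (1 : S → ℝ), Pi.one_apply, one_mul]
      by_cases hrt : t * r = s
      · rw [Set.indicator_of_mem (Set.mem_singleton_iff.mpr hrt) (1 : S → ℝ),
          Set.indicator_of_mem (show r ∈ {r' | t * r' = s} from hrt) (1 : S → ℝ)]
        rfl
      · rw [Set.indicator_of_notMem (fun hc => hrt (Set.mem_singleton_iff.mp hc)) (1 : S → ℝ),
          Set.indicator_of_notMem (show r ∉ {r' | t * r' = s} from hrt) (1 : S → ℝ)]
    have keyR : ∀ r, actR f φ r = Set.indicator {r' | r' * t = s} (1 : S → ℝ) r := by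
      intro r
      have hts : actR f φ r = f t * φ (r * t) :=
        tsum_eq_single t fun u hu => by
          have : f u = 0 := Set.indicator_of_notMem (by simpa using hu) _
          rw [this, zero_mul]
      rw [hts, hφdef, hfdef,
        Set.indicator_of_mem (Set.mem_singleton t) (1 : S → ℝ), Pi.one_apply, one_mul]
      by_cases hrt : r * t = s
      · rw [Set.indicator_of_mem (Set.mem_singleton_iff.mpr hrt) (1 : S → ℝ),
          Set.indicator_of_mem (show r ∈ {r' | r' * t = s} from hrt) (1 : S → ℝ)]
        rfl
      · rw [Set.indicator_of_notMem (fun hc => hrt (Set.mem_singleton_iff.mp hc)) (1 : S → ℝ),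
          Set.indicator_of_notMem (show r ∉ {r' | r' * t = s} from hrt) (1 : S → ℝ)]
    constructor
    · have heq : (fun r => actR f φ r / ω r) =
          fun r => Set.indicator {r' | r' * t = s} (1 : S → ℝ) r / ω r :=
        funext fun r => by rw [keyR r]
      exact heq ▸ h2
    · have heq : (fun r => act f φ r / ω r) =
          fun r => Set.indicator {r' | t * r' = s} (1 : S → ℝ) r / ω r :=
        funext fun r => by rw [keyL r]
      exact heq ▸ h1
  · intro h φ hφ f hf
    constructor
    · exact main_lemma (fun u r => u * r) hω.1 hω.2 (fun s t => (h s t).2) hφ hf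
    · exact main_lemma (fun u r => r * u) hω.1
        (fun u r => le_trans (hω.2 r u) (le_of_eq (mul_comm _ _)))
        (fun s t => (h s t).1) hφ hf
end

section
/- If S is a weakly cancellative semigroup and ω is any weight on S, then for all s, t ∈ S the functions 1_{t⁻¹s}/ω and 1_{st⁻¹}/ω belong to c₀(S); consequently ℓ¹(S,ω) is a dual Banach algebra with predual c₀(S). -/
open Set Filter

/-- A `c₀` function is bounded. -/
lemma IsC0.bounded {S : Type*} {g : S → ℝ} (h : IsC0 g) :
    ∃ C : ℝ, 0 ≤ C ∧ ∀ x, |g x| ≤ C := by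
  have hF := h 1 one_pos
  have hsum : (0 : ℝ) ≤ ∑ x ∈ hF.toFinset, |g x| :=
    Finset.sum_nonneg fun x _ => abs_nonneg _
  refine ⟨1 + ∑ x ∈ hF.toFinset, |g x|, by linarith, fun x => ?_⟩
  by_cases hx : x ∈ hF.toFinset
  · have : |g x| ≤ ∑ y ∈ hF.toFinset, |g y| :=
      Finset.single_le_sum (f := fun y => |g y|) (fun y _ => abs_nonneg _) hx
    linarith
  · have : ¬ (1 ≤ |g x|) := by simpa using hx
    linarith

/-- Key lemma: the convolution-type action of an `ℓ¹` function on a `c₀(S,ω)`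
function again lies in `c₀(S,ω)`, for an abstract "multiplication" `m` that is
compatible with the weight and weakly cancellative. -/
lemma key_c0 {S : Type*} [Mul S] {ω φ f : S → ℝ} (hω : IsWeight ω)
    (m : S → S → S) (hm : ∀ u r, ω (m u r) ≤ ω u * ω r)
    (hfin : ∀ (u : S) (F : Finset S), {r | m u r ∈ F}.Finite)
    (hφ : IsC0 fun s => φ s / ω s) (hf : Summable fun s => |f s| * ω s) :
    IsC0 fun r => (∑' u, f u * φ (m u r)) / ω r := by
  obtain ⟨C, hC0, hC⟩ := hφ.bounded
  have hωpos := hω.1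
  have hφle : ∀ x, |φ x| ≤ C * ω x := by
    intro x
    have h1 := hC x
    rw [abs_div, abs_of_pos (hωpos x), div_le_iff₀ (hωpos x)] at h1
    linarith
  intro ε hε
  set M := ∑' u, |f u| * ω u with hMdef
  have hterm : ∀ u, 0 ≤ |f u| * ω u := fun u => mul_nonneg (abs_nonneg _) (hωpos u).le
  have hM0 : 0 ≤ M := tsum_nonneg hterm
  set ε' : ℝ := ε / (2 * (C + 1)) with hε'def
  have hε' : 0 < ε' := by positivity
  set δ : ℝ := ε / (2 * (M + 1)) with hδdef
  have hδ : 0 < δ := by positivity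
  -- choose a finite set U with small tail
  have hhs := hf.hasSum
  have hev : ∀ᶠ U : Finset S in atTop, M - ε' < ∑ u ∈ U, |f u| * ω u :=
    hhs.eventually (eventually_gt_nhds (by linarith))
  obtain ⟨U, hU⟩ := hev.exists
  have hsubU : Summable ((fun u => |f u| * ω u) ∘ ((↑) : (↑U : Set S) → S)) :=
    hf.subtype _
  have hsubUc : Summable ((fun u => |f u| * ω u) ∘ ((↑) : ↥((↑U : Set S)ᶜ) → S)) :=
    hf.subtype _
  have hsplit : (∑' u : (↑U : Set S), |f u| * ω u) +
      (∑' u : ↥((↑U : Set S)ᶜ), |f u| * ω u) = M :=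
    Summable.tsum_add_tsum_compl hsubU hsubUc
  have hUsum : (∑' u : (↑U : Set S), |f u| * ω u) = ∑ u ∈ U, |f u| * ω u :=
    Finset.tsum_subtype' U fun u => |f u| * ω u
  have htail : (∑' u : ↥((↑U : Set S)ᶜ), |f u| * ω u) < ε' := by
    rw [hUsum] at hsplit; linarith
  -- the bad set
  have hB := hφ δ hδ
  set B := hB.toFinset with hBdef
  have hR : (⋃ u ∈ U, {r | m u r ∈ B}).Finite :=
    Set.Finite.biUnion U.finite_toSet fun u _ => hfin u B
  refine hR.subset fun r hr => ?_
  simp only [Set.mem_setOf_eq] at hr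
  by_contra hrR
  -- for each u ∈ U, m u r is not in B
  have hgood : ∀ u ∈ U, |φ (m u r)| ≤ δ * (ω u * ω r) := by
    intro u hu
    have hnB : m u r ∉ B := fun hmem => hrR (Set.mem_biUnion hu hmem)
    rw [hBdef, Set.Finite.mem_toFinset] at hnB
    simp only [Set.mem_setOf_eq, not_le] at hnB
    rw [abs_div, abs_of_pos (hωpos (m u r)), div_lt_iff₀ (hωpos (m u r))] at hnB
    calc |φ (m u r)| ≤ δ * ω (m u r) := by linarith
      _ ≤ δ * (ω u * ω r) := by
          exact mul_le_mul_of_nonneg_left (hm u r) hδ.le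
  -- summability at r
  have hbound : ∀ u, |f u * φ (m u r)| ≤ C * ω r * (|f u| * ω u) := by
    intro u
    rw [abs_mul]
    calc |f u| * |φ (m u r)| ≤ |f u| * (C * ω (m u r)) :=
          mul_le_mul_of_nonneg_left (hφle _) (abs_nonneg _)
      _ ≤ |f u| * (C * (ω u * ω r)) := by
          apply mul_le_mul_of_nonneg_left _ (abs_nonneg _)
          exact mul_le_mul_of_nonneg_left (hm u r) hC0
      _ = C * ω r * (|f u| * ω u) := by ring
  have hsum_r : Summable fun u => |f u * φ (m u r)| :=
    Summable.of_nonneg_of_le (fun u => abs_nonneg _) hbound (hf.mul_left _)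
  -- |tsum| ≤ tsum of abs
  have habs : |∑' u, f u * φ (m u r)| ≤ ∑' u, |f u * φ (m u r)| := by
    have h1 : Summable fun u => ‖f u * φ (m u r)‖ := by
      simpa only [Real.norm_eq_abs] using hsum_r
    simpa only [Real.norm_eq_abs] using norm_tsum_le_tsum_norm h1
  -- split the abs-sum
  have hsA : Summable ((fun u => |f u * φ (m u r)|) ∘ ((↑) : (↑U : Set S) → S)) :=
    hsum_r.subtype _
  have hsB : Summable ((fun u => |f u * φ (m u r)|) ∘ ((↑) : ↥((↑U : Set S)ᶜ) → S)) :=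
    hsum_r.subtype _
  have hsplit2 : (∑' u : (↑U : Set S), |f u * φ (m u r)|) +
      (∑' u : ↥((↑U : Set S)ᶜ), |f u * φ (m u r)|) = ∑' u, |f u * φ (m u r)| :=
    Summable.tsum_add_tsum_compl hsA hsB
  -- bound the head
  have hhead : (∑' u : (↑U : Set S), |f u * φ (m u r)|) ≤ δ * ω r * M := by
    rw [Finset.tsum_subtype' U fun u => |f u * φ (m u r)|]
    calc ∑ u ∈ U, |f u * φ (m u r)|
        ≤ ∑ u ∈ U, δ * ω r * (|f u| * ω u) := by
          apply Finset.sum_le_sum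
          intro u hu
          rw [abs_mul]
          calc |f u| * |φ (m u r)| ≤ |f u| * (δ * (ω u * ω r)) :=
                mul_le_mul_of_nonneg_left (hgood u hu) (abs_nonneg _)
            _ = δ * ω r * (|f u| * ω u) := by ring
      _ = δ * ω r * ∑ u ∈ U, |f u| * ω u := by rw [Finset.mul_sum]
      _ ≤ δ * ω r * M := by
          apply mul_le_mul_of_nonneg_left _ (mul_nonneg hδ.le (hωpos r).le)
          exact Summable.sum_le_tsum U (fun u _ => hterm u) hf
  -- bound the tail
  have htail2 : (∑' u : ↥((↑U : Set S)ᶜ), |f u * φ (m u r)|) ≤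
      C * ω r * ∑' u : ↥((↑U : Set S)ᶜ), |f u| * ω u := by
    rw [← tsum_mul_left]
    exact Summable.tsum_le_tsum (fun u => hbound u) hsB (hsubUc.mul_left _)
  have htail3 : (∑' u : ↥((↑U : Set S)ᶜ), |f u * φ (m u r)|) ≤ C * ω r * ε' := by
    refine htail2.trans ?_
    exact mul_le_mul_of_nonneg_left htail.le (mul_nonneg hC0 (hωpos r).le)
  -- combine
  have hfinal : |∑' u, f u * φ (m u r)| ≤ (δ * M + C * ε') * ω r := by
    calc |∑' u, f u * φ (m u r)| ≤ ∑' u, |f u * φ (m u r)| := habs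
      _ = (∑' u : (↑U : Set S), |f u * φ (m u r)|) +
          (∑' u : ↥((↑U : Set S)ᶜ), |f u * φ (m u r)|) := hsplit2.symm
      _ ≤ δ * ω r * M + C * ω r * ε' := add_le_add hhead htail3
      _ = (δ * M + C * ε') * ω r := by ring
  have hlt : δ * M + C * ε' < ε := by
    have h1 : δ * M < ε / 2 := by
      rw [hδdef]
      rw [div_mul_eq_mul_div, div_lt_div_iff₀ (by positivity) (by norm_num)]
      nlinarith
    have h2 : C * ε' < ε / 2 := by
      rw [hε'def]
      rw [mul_div_assoc', div_lt_div_iff₀ (by positivity) (by norm_num)]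
      nlinarith
    linarith
  have : |(∑' u, f u * φ (m u r)) / ω r| < ε := by
    rw [abs_div, abs_of_pos (hωpos r), div_lt_iff₀ (hωpos r)]
    calc |∑' u, f u * φ (m u r)| ≤ (δ * M + C * ε') * ω r := hfinal
      _ < ε * ω r := by
          exact mul_lt_mul_of_pos_right hlt (hωpos r)
  linarith [hr]

/-- If `S` is weakly cancellative then `1_{t⁻¹s}/ω, 1_{st⁻¹}/ω ∈ c₀(S)` for all `s,t`;
consequently `ℓ¹(S,ω)` is a dual Banach algebra with predual `c₀(S)`. -/
theorem dual_of_weaklyCancellative {S : Type*} [Semigroup S] {ω : S → ℝ}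
    (hω : IsWeight ω) (hS : WeaklyCancellative S) :
    (∀ s t : S,
        (IsC0 fun r => Set.indicator {r | t * r = s} (1 : S → ℝ) r / ω r) ∧
        (IsC0 fun r => Set.indicator {r | r * t = s} (1 : S → ℝ) r / ω r)) ∧
      (∀ φ : S → ℝ, IsC0w ω φ → ∀ f : S → ℝ, MemL1 ω f →
        IsC0w ω (act f φ) ∧ IsC0w ω (actR f φ)) := by
  constructor
  · intro s t
    constructor
    · intro ε hε
      refine ((hS t {s}).1.subset fun r hr => ?_)
      simp only [Set.mem_setOf_eq, Finset.mem_singleton]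
      by_contra hne
      have hnm : r ∉ {r : S | t * r = s} := hne
      have : Set.indicator {r | t * r = s} (1 : S → ℝ) r = 0 :=
        Set.indicator_of_notMem hnm _
      simp only [Set.mem_setOf_eq, this, zero_div, abs_zero] at hr
      linarith
    · intro ε hε
      refine ((hS t {s}).2.subset fun r hr => ?_)
      simp only [Set.mem_setOf_eq, Finset.mem_singleton]
      by_contra hne
      have hnm : r ∉ {r : S | r * t = s} := hne
      have : Set.indicator {r | r * t = s} (1 : S → ℝ) r = 0 :=
        Set.indicator_of_notMem hnm _
      simp only [Set.mem_setOf_eq, this, zero_div, abs_zero] at hr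
      linarith
  · intro φ hφ f hf
    constructor
    · exact key_c0 hω (fun u r => u * r) (fun u r => hω.2 u r)
        (fun u F => (hS u F).1) hφ hf
    · exact key_c0 hω (fun u r => r * u)
        (fun u r => (hω.2 r u).trans_eq (mul_comm _ _))
        (fun u F => (hS u F).2) hφ hf
end

section
/- Let ω and ω' be two locally equivalent weights on a semigroup S. If 1_{st⁻¹}/ω ∈ c₀(S) and 1_{t⁻¹s}/ω ∈ c₀(S) for all s, t ∈ S, then the same holds for ω'; hence ℓ¹(S,ω) is a dual Banach algebra with predual c₀(S) if and only if ℓ¹(S,ω') is. -/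
open Set Filter

lemma aux_c0_transfer {S : Type*} {ω ω' : S → ℝ} (hω : ∀ s, 0 < ω s)
    (hω' : ∀ s, 0 < ω' s) (A : Set S) (α : ℝ) (hα : 0 < α)
    (h : ∀ r ∈ A, ω r ≤ α * ω' r)
    (hc : IsC0 fun r => A.indicator (1 : S → ℝ) r / ω r) :
    IsC0 fun r => A.indicator (1 : S → ℝ) r / ω' r := by
  intro ε hε
  refine (hc (ε / α) (by positivity)).subset ?_
  intro x hx
  simp only [Set.mem_setOf_eq] at hx ⊢
  have hxA : x ∈ A := by
    by_contra h'
    rw [Set.indicator_of_notMem h'] at hx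
    simp at hx
    linarith
  rw [Set.indicator_of_mem hxA] at hx ⊢
  have h1 := hω x
  have h2 := hω' x
  rw [Pi.one_apply, abs_of_pos (by positivity)] at hx ⊢
  rw [div_le_div_iff₀ hα h1]
  rw [le_div_iff₀ h2] at hx
  have := h x hxA
  nlinarith

/-- For locally equivalent weights `ω` and `ω'`, `ℓ¹(S,ω)` is a dual Banach algebra with
predual `c₀(S)` iff `ℓ¹(S,ω')` is; i.e. the condition `1_{st⁻¹}/ω, 1_{t⁻¹s}/ω ∈ c₀(S)`
(for all `s,t`) transfers between locally equivalent weights. -/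
theorem dual_iff_of_locallyEquivalent {S : Type*} [Semigroup S] {ω ω' : S → ℝ}
    (hω : IsWeight ω) (hω' : IsWeight ω')
    (hle : ∀ s t : S, ∃ α β : ℝ, 0 < α ∧ 0 < β ∧
      ∀ r : S, (r * t = s ∨ t * r = s) → β * ω' r ≤ ω r ∧ ω r ≤ α * ω' r) :
    (∀ s t : S,
        (IsC0 fun r => Set.indicator {r | r * t = s} (1 : S → ℝ) r / ω r) ∧
        (IsC0 fun r => Set.indicator {r | t * r = s} (1 : S → ℝ) r / ω r)) ↔
      (∀ s t : S,
        (IsC0 fun r => Set.indicator {r | r * t = s} (1 : S → ℝ) r / ω' r) ∧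
        (IsC0 fun r => Set.indicator {r | t * r = s} (1 : S → ℝ) r / ω' r)) := by
  constructor <;> intro h s t <;> obtain ⟨α, β, hα, hβ, hb⟩ := hle s t
  · exact ⟨aux_c0_transfer hω.1 hω'.1 _ α hα (fun r hr => (hb r (Or.inl hr)).2) (h s t).1,
      aux_c0_transfer hω.1 hω'.1 _ α hα (fun r hr => (hb r (Or.inr hr)).2) (h s t).2⟩
  · refine ⟨aux_c0_transfer hω'.1 hω.1 _ (1/β) (by positivity)
        (fun r hr => ?_) (h s t).1,
      aux_c0_transfer hω'.1 hω.1 _ (1/β) (by positivity)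
        (fun r hr => ?_) (h s t).2⟩
    · have := (hb r (Or.inl hr)).1
      rw [one_div, ← div_eq_inv_mul, le_div_iff₀ hβ]
      linarith
    · have := (hb r (Or.inr hr)).1
      rw [one_div, ← div_eq_inv_mul, le_div_iff₀ hβ]
      linarith
end

section
/- Let S = (ℕ, min), where m ∧ n = min(m,n), and let ω be a weight on S. Then ℓ¹(S,ω) is a dual Banach algebra with predual c₀(S) (i.e. 1_{t⁻¹s}/ω ∈ c₀(S) for all s,t) if and only if 1/ω ∈ c₀(ℕ), i.e. ω(n) → ∞ as n → ∞. -/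
open Set Filter

/-- For `S = (ℕ, min)` and a weight `ω`, `ℓ¹(S,ω)` is a dual Banach algebra with predual
`c₀(S)` (i.e. `1_{t⁻¹s}/ω ∈ c₀(S)` for all `s,t`) iff `1/ω ∈ c₀(ℕ)`. -/
theorem nat_min_dual_iff {ω : ℕ → ℝ} (hpos : ∀ n, 0 < ω n)
    (hsub : ∀ m n : ℕ, ω (min m n) ≤ ω m * ω n) :
    (∀ s t : ℕ, IsC0 fun r => Set.indicator {r : ℕ | min t r = s} (1 : ℕ → ℝ) r / ω r) ↔
      IsC0 fun n : ℕ => 1 / ω n := by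
  constructor
  · intro h
    have h0 := h 0 0
    have : ({r : ℕ | min 0 r = 0} : Set ℕ) = Set.univ := by
      ext r; simp
    simpa [this] using h0
  · intro h s t ε hε
    apply (h ε hε).subset
    intro r hr
    simp only [Set.mem_setOf_eq] at hr ⊢
    refine le_trans hr ?_
    have hω := hpos r
    rw [abs_div, abs_div]
    apply div_le_div_of_nonneg_right ?_ (abs_nonneg (ω r))
    by_cases hm : r ∈ ({r : ℕ | min t r = s} : Set ℕ) <;>
      simp [Set.indicator_apply, hm]
end

section
/- Let ω be a weight on S = (ℤ, min) and let ω_ℕ be its restriction to ℕ. Then 1_{(m∧n⁻¹)}/ω ∈ c₀(ℤ) for all m, n ∈ ℤ if and only if 1/ω_ℕ ∈ c₀(ℕ). Consequently, ℓ¹((ℤ,min), ω) is a dual Banach algebra with predual c₀(ℤ) if and only if ω(n) → ∞ as n → +∞. -/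
open Set Filter

/-- For a weight `ω` on `(ℤ, min)`: `1_{m∧n⁻¹}/ω ∈ c₀(ℤ)` for all `m,n` iff
`1/ω_ℕ ∈ c₀(ℕ)`; consequently `ℓ¹((ℤ,min),ω)` is a dual Banach algebra with predual
`c₀(ℤ)` iff `ω(n) → ∞` as `n → +∞`. -/
theorem int_min_dual_iff {ω : ℤ → ℝ} (hpos : ∀ n, 0 < ω n)
    (hsub : ∀ m n : ℤ, ω (min m n) ≤ ω m * ω n) :
    ((∀ m n : ℤ, IsC0 fun k => Set.indicator {k : ℤ | min m k = n} (1 : ℤ → ℝ) k / ω k) ↔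
      IsC0 fun n : ℕ => 1 / ω (n : ℤ)) ∧
    ((∀ m n : ℤ, IsC0 fun k => Set.indicator {k : ℤ | min m k = n} (1 : ℤ → ℝ) k / ω k) ↔
      Filter.Tendsto ω Filter.atTop Filter.atTop) := by
  have habs : ∀ k : ℤ, |1 / ω k| = 1 / ω k := fun k =>
    abs_of_pos (div_pos one_pos (hpos k))
  have key : (∀ m n : ℤ, IsC0 fun k => Set.indicator {k : ℤ | min m k = n} (1 : ℤ → ℝ) k / ω k) ↔
      IsC0 fun n : ℕ => 1 / ω (n : ℤ) := by
    constructor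
    · intro h ε hε
      have h0 := h 0 0 ε hε
      apply Set.Finite.of_finite_image (f := (fun n : ℕ => (n : ℤ))) _
        (fun a _ b _ hab => by simpa using hab)
      apply h0.subset
      rintro k ⟨n, hn, rfl⟩
      simp only [Set.mem_setOf_eq] at hn ⊢
      have hmem : (n : ℤ) ∈ {k : ℤ | min 0 k = 0} := by
        simp [min_eq_left (Int.ofNat_nonneg n)]
      rw [Set.indicator_of_mem hmem]
      simpa using hn
    · intro h m n ε hε
      rcases lt_trichotomy n m with hnm | heq | hnm
      · apply (Set.finite_singleton n).subset
        intro k hk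
        simp only [Set.mem_setOf_eq] at hk
        by_cases hkm : k ∈ {k : ℤ | min m k = n}
        · simp only [Set.mem_setOf_eq] at hkm
          have : k = n := by omega
          simp [this]
        · rw [Set.indicator_of_notMem hkm] at hk
          simp at hk; linarith
      · subst heq
        apply Set.Finite.subset ((Set.finite_Icc n 0).union
          (((h ε hε).image (fun n : ℕ => (n : ℤ)))))
        intro k hk
        simp only [Set.mem_setOf_eq] at hk
        by_cases hkm : k ∈ {k : ℤ | min n k = n}
        · rw [Set.indicator_of_mem hkm] at hk
          simp only [Set.mem_setOf_eq] at hkm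
          have hmk : n ≤ k := by omega
          by_cases hk0 : 0 ≤ k
          · right
            refine ⟨k.toNat, ?_, Int.toNat_of_nonneg hk0⟩
            simpa [Set.mem_setOf_eq, Int.toNat_of_nonneg hk0] using hk
          · exact Or.inl ⟨hmk, by omega⟩
        · rw [Set.indicator_of_notMem hkm] at hk
          simp at hk; linarith
      · apply Set.Finite.subset (Set.finite_empty)
        intro k hk
        simp only [Set.mem_setOf_eq] at hk
        have hkm : k ∉ {k : ℤ | min m k = n} := by
          simp only [Set.mem_setOf_eq]; omega
        rw [Set.indicator_of_notMem hkm] at hk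
        simp at hk; linarith
  have key2 : (IsC0 fun n : ℕ => 1 / ω (n : ℤ)) ↔ Filter.Tendsto ω Filter.atTop Filter.atTop := by
    constructor
    · intro h
      rw [Filter.tendsto_atTop]
      intro C
      set C' : ℝ := max C 1 with hC'
      have hC'pos : 0 < C' := lt_of_lt_of_le one_pos (le_max_right _ _)
      have hfin := h (1 / C') (by positivity)
      obtain ⟨N, hN⟩ := hfin.bddAbove
      rw [Filter.eventually_atTop]
      refine ⟨(N : ℤ) + 1, fun k hk => ?_⟩
      have hk0 : 0 ≤ k := by omega
      have hnot : k.toNat ∉ {n : ℕ | 1 / C' ≤ |1 / ω (n : ℤ)|} := by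
        intro hmem
        have := hN hmem
        omega
      simp only [Set.mem_setOf_eq, Int.toNat_of_nonneg hk0, habs, not_le] at hnot
      have hωpos := hpos k
      have : C' < ω k := lt_of_one_div_lt_one_div hωpos hnot
      exact le_trans (le_max_left _ _) this.le
    · intro h ε hε
      rw [Filter.tendsto_atTop] at h
      obtain ⟨N, hN⟩ := Filter.eventually_atTop.mp (h (1 / ε + 1))
      apply (Set.finite_Icc 0 (max N 0).toNat).subset
      intro n hn
      simp only [Set.mem_setOf_eq, habs] at hn
      simp only [Set.mem_Icc]
      refine ⟨Nat.zero_le _, ?_⟩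
      by_contra hcon
      push_neg at hcon
      have hnN : N ≤ (n : ℤ) := by omega
      have hbig := hN _ hnN
      have hω := hpos (n : ℤ)
      have h1 : ε * ω (n : ℤ) ≤ 1 := (le_div_iff₀ hω).mp hn
      have h3 : ε * (1 / ε) = 1 := mul_one_div_cancel hε.ne'
      have h4 := mul_le_mul_of_nonneg_left hbig hε.le
      nlinarith
  exact ⟨key, key.trans key2⟩
end

section
/- Let S be a locally compact Hausdorff topological semigroup such that FK⁻¹ and K⁻¹F are relatively compact for all compact subsets F, K of S. Then for every μ ∈ M_b(S) and f ∈ C₀(S), the functions s ↦ ∫_S f(ts) dμ(t) and s ↦ ∫_S f(st) dμ(t) belong to C₀(S); i.e. the measure algebra M_b(S) is a dual Banach algebra with predual C₀(S). -/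
open Filter MeasureTheory

lemma measureAlgebra_dual_aux {S : Type*} [TopologicalSpace S] [T2Space S]
    [MeasurableSpace S] [BorelSpace S]
    (μ : Measure S) [IsFiniteMeasure μ] [μ.Regular]
    (f : ZeroAtInftyContinuousMap S ℝ)
    (m : S × S → S) (hm : Continuous m)
    (hcomp : ∀ F K : Set S, IsCompact F → IsCompact K →
      IsCompact (closure {r : S | ∃ k ∈ K, m (k, r) ∈ F})) :
    (Continuous fun s => ∫ t, f (m (t, s)) ∂μ) ∧
    Tendsto (fun s => ∫ t, f (m (t, s)) ∂μ) (cocompact S) (nhds 0) := by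
  set M : ℝ := ‖f.toBCF‖ with hM
  have hM0 : 0 ≤ M := norm_nonneg _
  have hfb : ∀ x : S, ‖f x‖ ≤ M := fun x => f.toBCF.norm_coe_le_norm x
  have hint : ∀ s : S, Integrable (fun t => f (m (t, s))) μ := by
    intro s
    refine ⟨(((map_continuous f).comp (hm.comp
      (continuous_id.prodMk continuous_const)))).aestronglyMeasurable, ?_⟩
    exact HasFiniteIntegral.of_bounded (C := M) (ae_of_all _ fun t => hfb _)
  set C : ℝ := (μ Set.univ).toReal with hC
  have hC0 : 0 ≤ C := ENNReal.toReal_nonneg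
  -- choosing a compact set whose complement has small measure
  have getK : ∀ η : ℝ, 0 < η → ∃ K : Set S, IsCompact K ∧ (μ Kᶜ).toReal ≤ η := by
    intro η hη
    obtain ⟨K, -, hKc, hKm⟩ := MeasurableSet.univ.exists_isCompact_diff_lt
      (measure_ne_top μ _) (show ENNReal.ofReal η ≠ 0 by
        simp only [ne_eq, ENNReal.ofReal_eq_zero, not_le]; exact hη)
    rw [← Set.compl_eq_univ_diff] at hKm
    exact ⟨K, hKc, le_of_le_of_eq (ENNReal.toReal_mono ENNReal.ofReal_ne_top hKm.le)
      (ENNReal.toReal_ofReal hη.le)⟩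
  -- splitting an integral over a compact set and its complement
  have bound : ∀ (g : S → ℝ) (K : Set S), IsCompact K → Integrable g μ →
      ∀ δ B : ℝ, (∀ t ∈ K, ‖g t‖ ≤ δ) → (∀ t, ‖g t‖ ≤ B) →
      ‖∫ t, g t ∂μ‖ ≤ δ * (μ K).toReal + B * (μ Kᶜ).toReal := by
    intro g K hKc hg δ B hδ hB
    have hsplit : (∫ t in K, g t ∂μ) + (∫ t in Kᶜ, g t ∂μ) = ∫ t, g t ∂μ :=
      integral_add_compl hKc.measurableSet hg
    calc ‖∫ t, g t ∂μ‖ = ‖(∫ t in K, g t ∂μ) + (∫ t in Kᶜ, g t ∂μ)‖ := by rw [hsplit]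
      _ ≤ ‖∫ t in K, g t ∂μ‖ + ‖∫ t in Kᶜ, g t ∂μ‖ := norm_add_le _ _
      _ ≤ δ * (μ K).toReal + B * (μ Kᶜ).toReal := by
          refine add_le_add ?_ ?_
          · exact norm_setIntegral_le_of_norm_le_const (measure_lt_top μ _) hδ
          · exact norm_setIntegral_le_of_norm_le_const (measure_lt_top μ Kᶜ)
              (fun t _ => hB t)
  have hKuniv : ∀ K : Set S, (μ K).toReal ≤ C + 1 := fun K =>
    le_trans (ENNReal.toReal_mono (measure_ne_top μ _)
      (measure_mono (Set.subset_univ K))) (by linarith)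
  constructor
  · -- Continuity
    rw [continuous_iff_continuousAt]
    intro s₀
    refine tendsto_sub_nhds_zero_iff.mp ?_
    rw [NormedAddCommGroup.tendsto_nhds_zero]
    intro ε hε
    set δ : ℝ := ε / 4 / (C + 1) with hδ
    have hδ0 : 0 < δ := by positivity
    obtain ⟨K, hKc, hKm⟩ := getK (ε / 4 / (2 * M + 1)) (by positivity)
    have hev : ∀ᶠ s in nhds s₀, ∀ t ∈ K, ‖f (m (t, s)) - f (m (t, s₀))‖ < δ := by
      refine hKc.eventually_forall_of_forall_eventually (fun t ht => ?_)
      have hcont : ContinuousAt (fun z : S × S => ‖f (m (z.2, z.1)) - f (m (z.2, s₀))‖)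
          (s₀, t) := by
        refine Continuous.continuousAt ?_
        fun_prop
      have := hcont.eventually_lt (continuousAt_const (y := δ)) (by simpa using hδ0)
      exact this.mono fun z hz => hz
    filter_upwards [hev] with s hs
    have hintdiff : Integrable (fun t => f (m (t, s)) - f (m (t, s₀))) μ :=
      (hint s).sub (hint s₀)
    have heq : (∫ t, f (m (t, s)) ∂μ) - (∫ t, f (m (t, s₀)) ∂μ)
        = ∫ t, (f (m (t, s)) - f (m (t, s₀))) ∂μ :=
      (integral_sub (hint s) (hint s₀)).symm
    rw [heq]
    have hb := bound _ K hKc hintdiff δ (2 * M)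
      (fun t ht => (hs t ht).le)
      (fun t => (norm_sub_le _ _).trans (by linarith [hfb (m (t, s)), hfb (m (t, s₀))]))
    have e1 : δ * (μ K).toReal ≤ ε / 4 := by
      calc δ * (μ K).toReal ≤ δ * (C + 1) := mul_le_mul_of_nonneg_left (hKuniv K) hδ0.le
        _ = ε / 4 := by rw [hδ, div_mul_cancel₀ _ (ne_of_gt (by linarith))]
    have e2 : 2 * M * (μ Kᶜ).toReal ≤ ε / 4 := by
      calc 2 * M * (μ Kᶜ).toReal ≤ (2 * M + 1) * (ε / 4 / (2 * M + 1)) :=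
            mul_le_mul (by linarith) hKm ENNReal.toReal_nonneg (by linarith)
        _ = ε / 4 := by field_simp
    linarith [hb]
  · -- Vanishing at infinity
    rw [NormedAddCommGroup.tendsto_nhds_zero]
    intro ε hε
    set δ : ℝ := ε / 4 / (C + 1) with hδ
    have hδ0 : 0 < δ := by positivity
    obtain ⟨F, hFc, hF⟩ := hasBasis_cocompact.eventually_iff.1
      (NormedAddCommGroup.tendsto_nhds_zero.1 (zero_at_infty f) δ hδ0)
    obtain ⟨K, hKc, hKm⟩ := getK (ε / 4 / (M + 1)) (by positivity)
    refine hasBasis_cocompact.eventually_iff.2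
      ⟨closure {r : S | ∃ k ∈ K, m (k, r) ∈ F}, hcomp F K hFc hKc, fun s hs => ?_⟩
    have hs' : ∀ t ∈ K, m (t, s) ∉ F := fun t ht hmem =>
      hs (subset_closure ⟨t, ht, hmem⟩)
    have hb := bound _ K hKc (hint s) δ M
      (fun t ht => (hF (hs' t ht)).le) (fun t => hfb _)
    have e1 : δ * (μ K).toReal ≤ ε / 4 := by
      calc δ * (μ K).toReal ≤ δ * (C + 1) := mul_le_mul_of_nonneg_left (hKuniv K) hδ0.le
        _ = ε / 4 := by rw [hδ, div_mul_cancel₀ _ (ne_of_gt (by linarith))]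
    have e2 : M * (μ Kᶜ).toReal ≤ ε / 4 := by
      calc M * (μ Kᶜ).toReal ≤ (M + 1) * (ε / 4 / (M + 1)) :=
            mul_le_mul (by linarith) hKm ENNReal.toReal_nonneg (by linarith)
        _ = ε / 4 := by field_simp
    linarith [hb]

/-- If `FK⁻¹` and `K⁻¹F` are relatively compact for all compact `F, K ⊆ S`, then the
measure algebra `M_b(S)` is a dual Banach algebra with predual `C₀(S)`: for every bounded
Radon measure `μ` and `f ∈ C₀(S)`, the functions `s ↦ ∫ f(ts) dμ(t)` and
`s ↦ ∫ f(st) dμ(t)` belong to `C₀(S)`. -/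
theorem measureAlgebra_dual {S : Type*} [TopologicalSpace S] [T2Space S]
    [LocallyCompactSpace S] [Semigroup S] [ContinuousMul S]
    [MeasurableSpace S] [BorelSpace S]
    (h : ∀ F K : Set S, IsCompact F → IsCompact K →
      IsCompact (closure {r : S | ∃ k ∈ K, r * k ∈ F}) ∧
      IsCompact (closure {r : S | ∃ k ∈ K, k * r ∈ F}))
    (μ : Measure S) [IsFiniteMeasure μ] [μ.Regular]
    (f : ZeroAtInftyContinuousMap S ℝ) :
    (Continuous fun s => ∫ t, f (t * s) ∂μ) ∧
    (Tendsto (fun s => ∫ t, f (t * s) ∂μ) (cocompact S) (nhds 0)) ∧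
    (Continuous fun s => ∫ t, f (s * t) ∂μ) ∧
    (Tendsto (fun s => ∫ t, f (s * t) ∂μ) (cocompact S) (nhds 0)) := by
  have A := measureAlgebra_dual_aux μ f (fun p => p.1 * p.2) continuous_mul
    (fun F K hF hK => (h F K hF hK).2)
  have B := measureAlgebra_dual_aux μ f (fun p => p.2 * p.1)
    (continuous_snd.mul continuous_fst)
    (fun F K hF hK => (h F K hF hK).1)
  exact ⟨A.1, A.2, B.1, B.2⟩
end
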